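/- Let V be a real vector space of odd finite dimension n and g a nondegenerate symmetric bilinear form on V. Let J₊, J₋ ∈ End(V) be g-skew-symmetric (g(J±x,y) = −g(x,J±y)) and X₊, X₋ ∈ V satisfy g(X±,X±) = 1, J±X± = 0 and J±² = −id_V + g(·,X±)X±. Define ℱ ∈ End(E(V)) by ℱ(X − g(X,·)) = J₋X − g(J₋X,·) and ℱ(X + g(X,·) + a) = (J₊X + aX₊) + g(J₊X + aX₊, ·) + (−g(X₊,X)) for all X ∈ V and a ∈ ℝ. Then ℱ is ⟨·,·⟩-skew-symmetric, ℱ commutes with the standard generalized metric endomorphism G, the kernel of ℱ is spanned by u₋ := X₋ − g(X₋,·), ⟨u₋,u₋⟩ = −1, and ℱ² = −Id − ⟨·,u₋⟩u₋. In other words, ℱ is a Bₙ-generalized almost complex structure on E(V) commuting with G, so (G, ℱ) is a Bₙ-generalized almost pseudo-Hermitian structure with components (g, J₊, J₋, X₊, X₋). -/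

import Mathlib

set_option maxHeartbeats 1000000


/-- The odd generalized tangent space `E(V) = V ⊕ V* ⊕ ℝ`. -/
abbrev EV (V : Type*) [AddCommGroup V] [Module ℝ V] : Type _ :=
  V × (V →ₗ[ℝ] ℝ) × ℝ

/-- The canonical scalar product of `E(V)`:
`⟨X+ξ+λ, Y+η+μ⟩ = (1/2)(η(X)+ξ(Y)) + λμ`. -/
noncomputable def spEV {V : Type*} [AddCommGroup V] [Module ℝ V]
    (p q : EV V) : ℝ :=
  (1 / 2) * (q.2.1 p.1 + p.2.1 q.1) + p.2.2 * q.2.2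

/-- Proposition 4.2 i) (pointwise, construction direction, `n` odd):
the endomorphism `ℱ` of `E(V)` built from components `(g, J₊, J₋, X₊, X₋)` is a
`⟨·,·⟩`-skew-symmetric endomorphism commuting with the standard generalized metric
endomorphism `G`, with kernel spanned by `u₋ = X₋ − g(X₋,·)`, `⟨u₋,u₋⟩ = −1`, and
`ℱ² = −Id − ⟨·,u₋⟩u₋`. -/
theorem stmt_3 {V : Type*} [AddCommGroup V] [Module ℝ V] [FiniteDimensional ℝ V]
    (hodd : Odd (Module.finrank ℝ V))
    (g : LinearMap.BilinForm ℝ V)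
    (hgsymm : ∀ x y, g x y = g y x)
    (hgnd : ∀ x, (∀ y, g x y = 0) → x = 0)
    (Jp Jm : V →ₗ[ℝ] V)
    (hJpskew : ∀ x y, g (Jp x) y = - g x (Jp y))
    (hJmskew : ∀ x y, g (Jm x) y = - g x (Jm y))
    (Xp Xm : V)
    (hXp : g Xp Xp = 1) (hXm : g Xm Xm = 1)
    (hJpXp : Jp Xp = 0) (hJmXm : Jm Xm = 0)
    (hJp2 : ∀ x, Jp (Jp x) = -x + g x Xp • Xp)
    (hJm2 : ∀ x, Jm (Jm x) = -x + g x Xm • Xm)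
    (F : EV V →ₗ[ℝ] EV V)
    (hFminus : ∀ X : V, F (X, -(g X), 0) = (Jm X, -(g (Jm X)), 0))
    (hFplus : ∀ (X : V) (a : ℝ),
      F (X, g X, a) = (Jp X + a • Xp, g (Jp X + a • Xp), -(g Xp X))) :
    (∀ p q : EV V, spEV (F p) q = - spEV p (F q)) ∧
    (∀ G : EV V →ₗ[ℝ] EV V,
      (∀ X : V, G (X, -(g X), 0) = (-X, g X, 0)) →
      (∀ (X : V) (a : ℝ), G (X, g X, a) = (X, g X, a)) →
      ∀ p : EV V, F (G p) = G (F p)) ∧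
    LinearMap.ker F = Submodule.span ℝ {((Xm, -(g Xm), 0) : EV V)} ∧
    spEV ((Xm, -(g Xm), 0) : EV V) ((Xm, -(g Xm), 0) : EV V) = -1 ∧
    (∀ p : EV V,
      F (F p) = -p - spEV p ((Xm, -(g Xm), 0) : EV V) • ((Xm, -(g Xm), 0) : EV V)) := by
  classical
  -- injectivity of `g` viewed as a map to the dual
  have hginj : ∀ A B : V, g A = g B → A = B := by
    intro A B h
    have h0 : A - B = 0 := hgnd _ (fun y => by simp [map_sub, h])
    have := sub_eq_zero.mp h0
    exact this
  -- surjectivity of `g` viewed as a map to the dual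
  have hgsurj : ∀ φ : V →ₗ[ℝ] ℝ, ∃ W : V, g W = φ := by
    intro φ
    have hgnd' : g.Nondegenerate :=
      ⟨hgnd, fun y hy => hgnd y (fun x => by rw [hgsymm]; exact hy x)⟩
    refine ⟨(LinearMap.BilinForm.toDual g hgnd').symm φ, ?_⟩
    ext y
    exact LinearMap.BilinForm.apply_toDual_symm_apply (hB := hgnd') (f := φ) (v := y)
  -- decomposition of a general element
  have hdecomp : ∀ p : EV V, ∃ X Z : V,
      p = ((X, -(g X), 0) : EV V) + ((Z, g Z, p.2.2) : EV V) := by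
    intro p
    obtain ⟨W, hW⟩ := hgsurj p.2.1
    refine ⟨(1/2 : ℝ) • (p.1 - W), (1/2 : ℝ) • (p.1 + W), ?_⟩
    have h1 : (1/2 : ℝ) • (p.1 - W) + (1/2 : ℝ) • (p.1 + W) = p.1 := by module
    have h2 : -(g ((1/2 : ℝ) • (p.1 - W))) + g ((1/2 : ℝ) • (p.1 + W)) = p.2.1 := by
      rw [← hW]; ext y
      simp only [LinearMap.add_apply, LinearMap.neg_apply, map_smul, map_sub, map_add,
        LinearMap.smul_apply, LinearMap.sub_apply, smul_eq_mul]
      ring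
    exact Prod.ext h1.symm (Prod.ext h2.symm (by simp))
  have hFgen : ∀ (X Z : V) (a : ℝ),
      F (((X, -(g X), 0) : EV V) + ((Z, g Z, a) : EV V)) =
        ((Jm X, -(g (Jm X)), 0) : EV V) +
        ((Jp Z + a • Xp, g (Jp Z + a • Xp), -(g Xp Z)) : EV V) := by
    intro X Z a
    rw [map_add, hFminus, hFplus]
  refine ⟨?_, ?_, ?_, ?_, ?_⟩
  · -- skew-symmetry
    intro p q
    obtain ⟨X, Z, hp⟩ := hdecomp p
    obtain ⟨Y, W, hq⟩ := hdecomp q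
    set a := p.2.2 with ha
    set b := q.2.2 with hb
    rw [hp, hq, hFgen, hFgen]
    simp only [spEV, Prod.fst_add, Prod.snd_add, LinearMap.add_apply, map_add, map_smul,
      LinearMap.neg_apply, map_neg, smul_eq_mul, LinearMap.smul_apply, zero_add, add_zero,
      neg_add_rev, neg_neg]
    have m1 : b * g Xp Z = b * g Z Xp := by rw [hgsymm Xp Z]
    have m2 : b * g Xp X = b * g X Xp := by rw [hgsymm Xp X]
    have m3 : a * g Y Xp = a * g Xp Y := by rw [hgsymm Y Xp]
    have m4 : a * g W Xp = a * g Xp W := by rw [hgsymm W Xp]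
    have s1 := hgsymm Y (Jm X)
    have s2 := hgsymm W (Jm X)
    have s3 := hgsymm Y (Jp Z)
    have s4 := hgsymm W (Jp Z)
    have s5 := hgsymm X (Jm Y)
    have s6 := hgsymm Z (Jm Y)
    have s7 := hgsymm X (Jp W)
    have s8 := hgsymm Z (Jp W)
    have k1 := hJmskew X Y
    have k2 := hJmskew X W
    have k3 := hJpskew Z Y
    have k4 := hJpskew Z W
    have k5 := hJmskew Y X
    have k6 := hJmskew Y Z
    have k7 := hJpskew W X
    have k8 := hJpskew W Z
    linarith [m1, m2, m3, m4, s1, s2, s3, s4, s5, s6, s7, s8, k1, k2, k3, k4, k5, k6, k7, k8]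
  · -- commutes with G
    intro G hGm hGp p
    obtain ⟨X, Z, hp⟩ := hdecomp p
    rw [hp, map_add, map_add, hGm, hGp, hFgen]
    have hGm' : F ((-X, g X, 0) : EV V) = ((-(Jm X), g (Jm X), 0) : EV V) := by
      have e : ((-X, g X, 0) : EV V) = (-X, -(g (-X)), 0) := by simp
      rw [e, hFminus]; simp
    rw [map_add, hGm', hFplus, hGm, hGp]
  · -- kernel
    apply le_antisymm
    · intro p hp
      rw [LinearMap.mem_ker] at hp
      obtain ⟨X, Z, hpd⟩ := hdecomp p
      set a := p.2.2 with ha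
      rw [hpd, hFgen] at hp
      have h1 : Jm X + (Jp Z + a • Xp) = 0 := congrArg Prod.fst hp
      have h2 : -(g (Jm X)) + g (Jp Z + a • Xp) = 0 := congrArg (fun t : EV V => t.2.1) hp
      have h3 : (0 : ℝ) + -(g Xp Z) = 0 := congrArg (fun t : EV V => t.2.2) hp
      have hXpZ : g Xp Z = 0 := by linarith
      have hform : g (Jp Z + a • Xp) = g (Jm X) := by
        have := h2
        rw [neg_add_eq_zero] at this
        exact this.symm
      have hveq : Jp Z + a • Xp = Jm X := hginj _ _ hform
      have hJmX : Jm X = 0 := by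
        rw [hveq] at h1
        have h2Jm : (2 : ℝ) • Jm X = 0 := by rw [two_smul]; exact h1
        rcases smul_eq_zero.mp h2Jm with h | h
        · norm_num at h
        · exact h
      have hJpZ : Jp Z + a • Xp = 0 := by rw [hveq, hJmX]
      have hZ0 : Z = 0 := by
        have happ : Jp (Jp Z + a • Xp) = 0 := by rw [hJpZ, map_zero]
        rw [map_add, map_smul, hJpXp, smul_zero, add_zero, hJp2] at happ
        have hZ : Z = g Z Xp • Xp := by
          have := happ
          rw [neg_add_eq_zero] at this
          exact this
        have hgZXp : g Z Xp = 0 := by rw [hgsymm Z Xp, hXpZ]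
        rw [hZ, hgZXp, zero_smul]
      have ha0 : a = 0 := by
        have hax : a • Xp = 0 := by
          rw [hZ0, map_zero, zero_add] at hJpZ
          exact hJpZ
        have : g Xp (a • Xp) = 0 := by rw [hax, map_zero]
        rw [map_smul, smul_eq_mul, hXp, mul_one] at this
        exact this
      have hX : X = g X Xm • Xm := by
        have happ : Jm (Jm X) = 0 := by rw [hJmX, map_zero]
        rw [hJm2] at happ
        rw [neg_add_eq_zero] at happ
        exact happ
      rw [Submodule.mem_span_singleton]
      have hp2 : p = ((X, -(g X), 0) : EV V) := by
        rw [hpd, ha0, hZ0, map_zero]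
        simp
      obtain ⟨c, hc⟩ : ∃ c : ℝ, X = c • Xm := ⟨g X Xm, hX⟩
      refine ⟨c, ?_⟩
      rw [hp2, hc]
      simp [Prod.ext_iff, map_smul, smul_neg]
    · rw [Submodule.span_le, Set.singleton_subset_iff]
      have hFu : F ((Xm, -(g Xm), 0) : EV V) = 0 := by
        rw [hFminus, hJmXm]
        simp [Prod.ext_iff]
      simpa [SetLike.mem_coe, LinearMap.mem_ker] using hFu
  · -- norm of u₋
    simp only [spEV, LinearMap.neg_apply, mul_zero, add_zero, hXm]
    ring
  · -- F² = -Id - ⟨·,u₋⟩u₋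
    intro p
    obtain ⟨X, Z, hpd⟩ := hdecomp p
    set a := p.2.2 with ha
    have hc : spEV p ((Xm, -(g Xm), 0) : EV V) = -(g X Xm) := by
      rw [hpd]
      simp only [spEV, Prod.fst_add, Prod.snd_add, LinearMap.add_apply, LinearMap.neg_apply,
        map_add, mul_zero, add_zero]
      have := hgsymm Xm X
      have := hgsymm Xm Z
      have := hgsymm Z Xm
      linarith
    rw [hc]
    rw [hpd, hFgen, map_add, hFminus, hFplus]
    have hA : Jp (Jp Z + a • Xp) + (-(g Xp Z)) • Xp = -Z := by
      rw [map_add, map_smul, hJpXp, smul_zero, add_zero, hJp2, hgsymm Z Xp]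
      module
    have hthird : g Xp (Jp Z + a • Xp) = a := by
      rw [map_add, map_smul, smul_eq_mul, hXp, mul_one]
      have h0 : g Xp (Jp Z) = 0 := by
        have := hJpskew Xp Z
        rw [hJpXp, map_zero, LinearMap.zero_apply] at this
        linarith
      rw [h0, zero_add]
    rw [hA, hthird, hJm2]
    refine Prod.ext ?_ (Prod.ext ?_ ?_)
    · show (-X + g X Xm • Xm) + -Z = _
      simp only [Prod.fst_sub, Prod.fst_neg, Prod.fst_add, Prod.smul_fst, Prod.fst_add]
      module
    · show -(g (-X + g X Xm • Xm)) + g (-Z) = _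
      simp only [Prod.snd_sub, Prod.snd_neg, Prod.snd_add, Prod.smul_snd, Prod.fst_sub,
        Prod.fst_neg, Prod.fst_add, Prod.smul_fst]
      ext y
      simp only [map_add, map_neg, map_smul, LinearMap.add_apply, LinearMap.neg_apply,
        LinearMap.sub_apply, LinearMap.smul_apply, smul_eq_mul, neg_smul]
      ring
    · show (0 : ℝ) + -a = _
      simp
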